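/- arXiv:1806.01238 — 5 statements merged into one kernel-verified Lean document; each statement's English description precedes it below -/
import Mathlib

section
/- Let x_1,...,x_n and y_1,...,y_n be points in R^d with the x_i pairwise distinct and the y_i pairwise distinct. Then T(x_i)=y_i is the unique cyclically monotone bijection from {x_1,...,x_n} to {y_1,...,y_n} if and only if there exist real numbers ψ_1,...,ψ_n such that ⟨x_i, y_i⟩ - ψ_i > max_{j≠i} (⟨x_i, y_j⟩ - ψ_j) for every i = 1,...,n. -/
open scoped RealInnerProductSpace BigOperators

namespace UCM

open Finset



/-- telescoping sum around a cycle is zero -/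
lemma tele {n m : ℕ} (g : Fin n → ℝ) (p : Fin (m+1) → Fin n) :
    ∑ k : Fin (m+1), (g (p (k+1)) - g (p k)) = 0 := by
  rw [Finset.sum_sub_distrib]
  have : ∑ k : Fin (m+1), g (p (k+1)) = ∑ k : Fin (m+1), g (p k) :=
    Equiv.sum_comp (Equiv.addRight (1 : Fin (m+1))) (fun k => g (p k))
  rw [this, sub_self]

lemma sum_shift {m : ℕ} (g : ℕ → ℝ) (h : g m = g 0) :
    ∑ k ∈ range m, g (k+1) = ∑ k ∈ range m, g k := by
  have h1 := Finset.sum_range_succ' g m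
  have h2 := Finset.sum_range_succ g m
  rw [h] at h2
  linarith

/-- existence of a potential for a matrix with nonnegative closed walks -/
lemma exists_potential {n : ℕ} (hn : 0 < n) (w : Fin n → Fin n → ℝ)
    (H : ∀ m, 0 < m → ∀ f : ℕ → Fin n, f m = f 0 →
      0 ≤ ∑ k ∈ range m, w (f k) (f (k+1))) :
    ∃ ψ : Fin n → ℝ, ∀ i j, ψ i ≤ ψ j + w i j := by
  set r : Fin n := ⟨0, hn⟩ with hr
  set S : Fin n → Set ℝ := fun i =>
    { s | ∃ (m : ℕ) (f : ℕ → Fin n), 0 < m ∧ f 0 = i ∧ f m = r ∧ s = ∑ k ∈ range m, w (f k) (f (k+1)) } with hS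
  have hprep : ∀ (i j : Fin n), ∀ s ∈ S j, (w i j + s) ∈ S i := by
    rintro i j s ⟨m, f, hm, h0, hrm, rfl⟩
    refine ⟨m + 1, fun k => if k = 0 then i else f (k-1), Nat.succ_pos m, rfl, by simp [hrm], ?_⟩
    rw [Finset.sum_range_succ']
    simp [h0, add_comm]
  have hne : ∀ i, (S i).Nonempty := by
    intro i
    refine ⟨w i r, 1, fun k => if k = 0 then i else r, one_pos, rfl, by simp, by simp⟩
  have hlow : ∀ i, ∀ s ∈ S i, -(w r i) ≤ s := by
    intro i s hs
    have hmem := hprep r i s hs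
    obtain ⟨m, f, hm, h0, hrm, hsum⟩ := hmem
    have := H m hm f (by rw [hrm, h0])
    rw [← hsum] at this
    linarith
  have hbdd : ∀ i, BddBelow (S i) := fun i => ⟨-(w r i), fun s hs => hlow i s hs⟩
  refine ⟨fun i => sInf (S i), fun i j => ?_⟩
  have h1 : ∀ s ∈ S j, sInf (S i) - w i j ≤ s := by
    intro s hs
    have := csInf_le (hbdd i) (hprep i j s hs)
    linarith
  have := le_csInf (hne j) h1
  linarith



lemma decomp {n : ℕ} (w : Fin n → Fin n → ℝ) (hdiag : ∀ i, w i i = 0)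
    (hs : ∀ m, 1 < m → ∀ f : ℕ → Fin n,
      (∀ k l, k < m → l < m → f k = f l → k = l) → f m = f 0 →
      0 ≤ ∑ k ∈ range m, w (f k) (f (k+1))) :
    ∀ m, ∀ f : ℕ → Fin n, f m = f 0 → 0 ≤ ∑ k ∈ range m, w (f k) (f (k+1)) := by
  intro m
  induction m using Nat.strong_induction_on with
  | _ m IH =>
    intro f hf
    match m, hf with
    | 0, hf => simp
    | 1, hf => simpa [hf] using (hdiag (f 0)).ge
    | (m+2), hf =>
      set M := m + 2 with hM
      by_cases hinj : ∀ k l, k < M → l < M → f k = f l → k = l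
      · exact hs M (by omega) f hinj hf
      · push_neg at hinj
        obtain ⟨k, l, hk, hl, hfe, hkl⟩ := hinj
        -- get s < t < M with f s = f t
        obtain ⟨s, t, hst, htM, hfst⟩ : ∃ s t, s < t ∧ t < M ∧ f s = f t := by
          rcases lt_or_gt_of_ne hkl with h | h
          · exact ⟨k, l, h, hl, hfe⟩
          · exact ⟨l, k, h, hk, hfe.symm⟩
        set F : ℕ → ℝ := fun k => w (f k) (f (k+1)) with hF
        -- first subwalk
        have IH1 : 0 ≤ ∑ k ∈ range (t - s), F (s + k) := by
          have := IH (t - s) (by omega) (fun k => f (s + k))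
            (by show f (s + (t - s)) = f (s + 0); rw [Nat.add_sub_cancel' (le_of_lt hst)]; exact hfst.symm)
          simpa [hF, ← add_assoc] using this
        -- second subwalk
        set M2 := M - (t - s) with hM2
        set h2 : ℕ → Fin n := fun k => if k ≤ s then f k else f (k + (t - s)) with hh2
        have hsM2 : s < M2 := by omega
        have IH2 : 0 ≤ ∑ k ∈ range M2, w (h2 k) (h2 (k+1)) := by
          refine IH M2 (by omega) h2 ?_
          simp only [hh2]
          rw [if_neg (by omega), if_pos (by omega)]
          have : M2 + (t - s) = M := by omega
          rw [this, hf]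
        -- compute second subwalk sum
        have hsplit2 : ∑ k ∈ range M2, w (h2 k) (h2 (k+1))
            = ∑ k ∈ range s, F k + ∑ k ∈ Ico t M, F k := by
          rw [← Finset.sum_range_add_sum_Ico _ (le_of_lt hsM2)]
          congr 1
          · apply Finset.sum_congr rfl
            intro k hk
            simp only [mem_range] at hk
            simp only [hh2, hF]
            rw [if_pos (by omega), if_pos (by omega)]
          · rw [Finset.sum_Ico_eq_sum_range, Finset.sum_Ico_eq_sum_range]
            have hMt : M2 - s = M - t := by omega
            rw [hMt]
            apply Finset.sum_congr rfl
            intro i hi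
            simp only [mem_range] at hi
            simp only [hh2, hF]
            rcases Nat.eq_zero_or_pos i with rfl | hip
            · rw [if_pos (by omega), if_neg (by omega)]
              have e1 : s + 0 + 1 + (t - s) = t + 0 + 1 := by omega
              rw [e1]
              simp only [Nat.add_zero]
              rw [hfst]
            · rw [if_neg (by omega), if_neg (by omega)]
              have e1 : s + i + (t - s) = t + i := by omega
              have e2 : s + i + 1 + (t - s) = t + i + 1 := by omega
              rw [e1, e2]
        -- total sum splits
        have e1 : ∑ k ∈ range M, F k = ∑ k ∈ range t, F k + ∑ k ∈ Ico t M, F k :=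
          (Finset.sum_range_add_sum_Ico F (le_of_lt htM)).symm
        have e2 : ∑ k ∈ range t, F k = ∑ k ∈ range s, F k + ∑ k ∈ Ico s t, F k :=
          (Finset.sum_range_add_sum_Ico F (le_of_lt hst)).symm
        have e3 : ∑ k ∈ Ico s t, F k = ∑ k ∈ range (t - s), F (s + k) :=
          Finset.sum_Ico_eq_sum_range F s t
        have htot : ∑ k ∈ range M, F k
            = ∑ k ∈ range (t - s), F (s + k)
              + (∑ k ∈ range s, F k + ∑ k ∈ Ico t M, F k) := by linarith
        rw [show ∑ k ∈ range M, w (f k) (f (k+1)) = ∑ k ∈ range M, F k from rfl, htot]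
        rw [hsplit2] at IH2
        linarith



lemma simple_cycle_perm {n m : ℕ} (a : Fin n → Fin n → ℝ) (hdiag : ∀ i, a i i = 0)
    (f : ℕ → Fin n) (hm : 1 < m)
    (hinj : ∀ k l, k < m → l < m → f k = f l → k = l) (hf : f m = f 0) :
    ∃ σ : Equiv.Perm (Fin n), σ ≠ 1 ∧
      ∑ i : Fin n, a i (σ i) = ∑ k ∈ range m, a (f k) (f (k+1)) := by
  set l : List (Fin n) := (List.range m).map (fun k => f k) with hl
  have hlen : l.length = m := by simp [hl]
  have hnodup : l.Nodup := by
    refine List.Nodup.map_on ?_ List.nodup_range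
    intro k hk k' hk' he
    exact hinj k k' (List.mem_range.mp hk) (List.mem_range.mp hk') he
  set σ : Equiv.Perm (Fin n) := l.formPerm with hσ
  have hgetl : ∀ k, (hk : k < m) → l[k]'(by omega) = f k := by
    intro k hk
    simp [hl]
  have hstep : ∀ k, k < m → σ (f k) = f (k+1) := by
    intro k hk
    have h1 : σ (l[k]'(by omega)) = l[(k+1) % l.length]'(Nat.mod_lt _ (by omega)) :=
      List.formPerm_apply_getElem l hnodup k (by omega)
    rw [hgetl k hk] at h1
    rw [h1, hgetl ((k+1) % l.length) (by rw [hlen]; exact Nat.mod_lt _ (by omega))]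
    rw [hlen]
    rcases Nat.lt_or_ge (k+1) m with h | h
    · rw [Nat.mod_eq_of_lt h]
    · have hkm : k + 1 = m := by omega
      rw [hkm, Nat.mod_self, ← hf]
  have hmeml : ∀ v : Fin n, v ∈ l ↔ ∃ k, k < m ∧ f k = v := by
    intro v; simp [hl, List.mem_map, List.mem_range]
  have hσne : σ ≠ 1 := by
    intro h
    have h1 : σ (f 0) = f 1 := hstep 0 (by omega)
    rw [h] at h1
    simp only [Equiv.Perm.one_apply] at h1
    exact absurd (hinj 0 1 (by omega) (by omega) h1) (by omega)
  refine ⟨σ, hσne, ?_⟩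
  have himg : l.toFinset = (Finset.range m).image (fun k => f k) := by
    ext v
    simp [hmeml v, Finset.mem_image]
  have h1 : ∑ i : Fin n, a i (σ i) = ∑ i ∈ l.toFinset, a i (σ i) := by
    symm
    apply Finset.sum_subset (Finset.subset_univ _)
    intro i _ hi
    rw [List.formPerm_apply_of_notMem (by simpa using hi), hdiag]
  rw [h1, himg, Finset.sum_image (by
    intro k hk k' hk' he
    exact hinj k k' (Finset.mem_range.mp hk) (Finset.mem_range.mp hk') he)]
  apply Finset.sum_congr rfl
  intro k hk
  rw [hstep k (Finset.mem_range.mp hk)]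

lemma inj_le {n m : ℕ} (f : ℕ → Fin n)
    (hinj : ∀ k l, k < m → l < m → f k = f l → k = l) : m ≤ n := by
  have := Finset.card_le_card_of_injOn (fun k => f k) (fun k _ => Finset.mem_univ (f k))
    (fun k hk k' hk' he => hinj k k' (Finset.mem_range.mp hk) (Finset.mem_range.mp hk') he)
  simpa using this



variable {d n : ℕ}

/-- cyclic monotonicity from a potential certificate -/
lemma cycmono (x y : Fin n → EuclideanSpace ℝ (Fin d)) (τ : Fin n → Fin n) (φ : Fin n → ℝ)
    (hub : ∀ i j, ⟪x i, y (τ j)⟫ - φ (τ j) ≤ ⟪x i, y i⟫ - φ i)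
    (heq : ∀ j, ⟪x j, y (τ j)⟫ - φ (τ j) = ⟪x j, y j⟫ - φ j) :
    ∀ (m : ℕ) (p : Fin (m + 1) → Fin n),
      ∑ k : Fin (m + 1), ⟪y (τ (p k)), x (p (k + 1)) - x (p k)⟫ ≤ 0 := by
  intro m p
  set g : Fin n → ℝ := fun t => ⟪x t, y t⟫ - φ t with hg
  have hterm : ∀ k : Fin (m+1),
      ⟪y (τ (p k)), x (p (k + 1)) - x (p k)⟫ ≤ g (p (k+1)) - g (p k) := by
    intro k
    rw [inner_sub_right]
    rw [real_inner_comm (x (p (k+1))) (y (τ (p k))), real_inner_comm (x (p k)) (y (τ (p k)))]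
    have h1 := hub (p (k+1)) (p k)
    have h2 := heq (p k)
    simp only [hg]
    linarith
  calc ∑ k : Fin (m + 1), ⟪y (τ (p k)), x (p (k + 1)) - x (p k)⟫
      ≤ ∑ k : Fin (m+1), (g (p (k+1)) - g (p k)) := Finset.sum_le_sum (fun k _ => hterm k)
    _ = 0 := tele g p


end UCM

/-- `x i ↦ y i` is the unique cyclically monotone bijection from
`{x 1, ..., x n}` to `{y 1, ..., y n}` iff there exist weights `ψ i` such that
`⟪x i, y i⟫ - ψ i > max_{j ≠ i} (⟪x i, y j⟫ - ψ j)` for every `i`. -/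
theorem unique_cyclically_monotone_iff_exists_strict_weights
    {d n : ℕ} (x y : Fin n → EuclideanSpace ℝ (Fin d))
    (hx : Function.Injective x) (hy : Function.Injective y) :
    ((∀ (m : ℕ) (i : Fin (m + 1) → Fin n),
        ∑ k : Fin (m + 1), ⟪y (i k), x (i (k + 1)) - x (i k)⟫ ≤ 0) ∧
      ∀ σ : Equiv.Perm (Fin n),
        (∀ (m : ℕ) (i : Fin (m + 1) → Fin n),
          ∑ k : Fin (m + 1), ⟪y (σ (i k)), x (i (k + 1)) - x (i k)⟫ ≤ 0) → σ = 1)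
      ↔ ∃ ψ : Fin n → ℝ, ∀ i j : Fin n, j ≠ i →
          ⟪x i, y j⟫ - ψ j < ⟪x i, y i⟫ - ψ i := by
  constructor
  · rintro ⟨h1, h2⟩
    by_cases hn : n < 2
    · exact ⟨fun _ => 0, fun i j hji => absurd (Fin.ext (by omega)) hji⟩
    · push_neg at hn
      set a : Fin n → Fin n → ℝ := fun i j => ⟪x i, y i⟫ - ⟪x i, y j⟫ with ha
      have hadiag : ∀ i, a i i = 0 := fun i => sub_self _
      -- closed-walk nonnegativity of `a` via reversed walks
      have Hclosed : ∀ m, 0 < m → ∀ f : ℕ → Fin n, f m = f 0 →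
          0 ≤ ∑ k ∈ Finset.range m, a (f k) (f (k+1)) := by
        intro m hm f hf
        obtain ⟨m', rfl⟩ : ∃ m', m = m' + 1 := ⟨m - 1, by omega⟩
        set G : ℕ → ℝ :=
          fun k => ⟪y (f (m' + 1 - k)), x (f (m' - k)) - x (f (m' + 1 - k))⟫ with hG
        have hpk : ∀ k : Fin (m'+1),
            f (m' + 1 - ((k + 1 : Fin (m'+1)) : ℕ)) = f (m' - (k : ℕ)) := by
          intro k
          by_cases hk : k = Fin.last m'
          · subst hk
            have hlast : (Fin.last m' + 1 : Fin (m'+1)) = 0 := by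
              ext
              simp [Fin.val_add_one]
            rw [hlast]
            simp only [Fin.val_zero, Nat.sub_zero, Fin.val_last, Nat.sub_self]
            exact hf
          · have hlt : k < Fin.last m' := lt_of_le_of_ne (Fin.le_last k) hk
            rw [Fin.val_add_one_of_lt hlt]
            congr 1
            have := Fin.val_lt_last hk
            omega
        have hFin : ∑ k : Fin (m'+1), G k.val ≤ 0 := by
          have h := h1 m' (fun k : Fin (m'+1) => f (m' + 1 - k.val))
          refine le_trans (le_of_eq ?_) h
          apply Finset.sum_congr rfl
          intro k _
          simp only [hG]
          rw [hpk k]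
        have hrange : ∑ k ∈ Finset.range (m'+1), G k ≤ 0 := by
          rw [← Fin.sum_univ_eq_sum_range G (m'+1)]
          exact hFin
        have hrefl := Finset.sum_range_reflect G (m'+1)
        simp only [Nat.add_sub_cancel] at hrefl
        have hkey : ∑ j ∈ Finset.range (m'+1),
            (⟪x (f j), y (f (j+1))⟫ - ⟪x (f (j+1)), y (f (j+1))⟫) ≤ 0 := by
          have hG2 : ∀ j ∈ Finset.range (m'+1),
              G (m' - j) = ⟪x (f j), y (f (j+1))⟫ - ⟪x (f (j+1)), y (f (j+1))⟫ := by
            intro j hj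
            simp only [Finset.mem_range] at hj
            simp only [hG]
            have e1 : m' + 1 - (m' - j) = j + 1 := by omega
            have e2 : m' - (m' - j) = j := by omega
            rw [e1, e2, inner_sub_right,
              real_inner_comm (x (f j)) (y (f (j+1))),
              real_inner_comm (x (f (j+1))) (y (f (j+1)))]
          calc ∑ j ∈ Finset.range (m'+1),
              (⟪x (f j), y (f (j+1))⟫ - ⟪x (f (j+1)), y (f (j+1))⟫)
              = ∑ j ∈ Finset.range (m'+1), G (m' - j) :=
                (Finset.sum_congr rfl hG2).symm
            _ = ∑ j ∈ Finset.range (m'+1), G j := hrefl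
            _ ≤ 0 := hrange
        have hB : ∑ j ∈ Finset.range (m'+1), ⟪x (f (j+1)), y (f (j+1))⟫
            = ∑ j ∈ Finset.range (m'+1), ⟪x (f j), y (f j)⟫ := by
          refine UCM.sum_shift (fun j => ⟪x (f j), y (f j)⟫) ?_
          simp only [hf]
        rw [Finset.sum_sub_distrib] at hkey
        have hexp : ∑ k ∈ Finset.range (m'+1), a (f k) (f (k+1))
            = ∑ k ∈ Finset.range (m'+1), ⟪x (f k), y (f k)⟫
              - ∑ k ∈ Finset.range (m'+1), ⟪x (f k), y (f (k+1))⟫ := by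
          simp only [ha]
          rw [Finset.sum_sub_distrib]
        rw [hexp]
        linarith
      obtain ⟨φ, hφ⟩ := UCM.exists_potential (by omega : 0 < n) a Hclosed
      have hposσ : ∀ σ : Equiv.Perm (Fin n), σ ≠ 1 → 0 < ∑ i : Fin n, a i (σ i) := by
        intro σ hσ
        by_contra hle
        push_neg at hle
        have hterm : ∀ i, 0 ≤ a i (σ i) - (φ i - φ (σ i)) := fun i => by
          have := hφ i (σ i); linarith
        have hsumφ : ∑ i : Fin n, (φ i - φ (σ i)) = 0 := by
          rw [Finset.sum_sub_distrib, Equiv.sum_comp σ φ, sub_self]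
        have hsum : ∑ i : Fin n, (a i (σ i) - (φ i - φ (σ i))) ≤ 0 := by
          rw [Finset.sum_sub_distrib, hsumφ]
          linarith
        have heach := (Finset.sum_eq_zero_iff_of_nonneg (fun i _ => hterm i)).mp
          (le_antisymm hsum (Finset.sum_nonneg (fun i _ => hterm i)))
        have hub : ∀ i j, ⟪x i, y (σ j)⟫ - φ (σ j) ≤ ⟪x i, y i⟫ - φ i := by
          intro i j
          have := hφ i (σ j)
          simp only [ha] at this
          linarith
        have heq2 : ∀ j, ⟪x j, y (σ j)⟫ - φ (σ j) = ⟪x j, y j⟫ - φ j := by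
          intro j
          have := heach j (Finset.mem_univ j)
          simp only [ha] at this
          linarith
        exact hσ (h2 σ (UCM.cycmono x y σ φ hub heq2))
      have hswapne : (Equiv.swap (⟨0, by omega⟩ : Fin n) ⟨1, by omega⟩) ≠ 1 := by
        intro h
        have h0 : (Equiv.swap (⟨0, by omega⟩ : Fin n) ⟨1, by omega⟩) ⟨0, by omega⟩
            = ⟨1, by omega⟩ := Equiv.swap_apply_left _ _
        rw [h] at h0
        simp only [Equiv.Perm.one_apply] at h0
        exact absurd (congrArg Fin.val h0) (by simp)
      have hSpne : ((Finset.univ : Finset (Equiv.Perm (Fin n))).erase 1).Nonempty :=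
        ⟨_, Finset.mem_erase.mpr ⟨hswapne, Finset.mem_univ _⟩⟩
      set δ := ((Finset.univ : Finset (Equiv.Perm (Fin n))).erase 1).inf' hSpne
        (fun σ => ∑ i : Fin n, a i (σ i)) with hδdef
      have hδpos : 0 < δ := by
        rw [hδdef, Finset.lt_inf'_iff]
        intro σ hσmem
        exact hposσ σ (Finset.mem_erase.mp hσmem).1
      set c0 : ℝ := δ / n with hc0def
      have hc0 : 0 < c0 := by
        apply div_pos hδpos
        exact_mod_cast (by omega : 0 < n)
      set a' : Fin n → Fin n → ℝ := fun i j => a i j - (if i = j then 0 else c0) with ha'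
      have ha'diag : ∀ i, a' i i = 0 := by
        intro i
        simp [ha', hadiag]
      have hsimple : ∀ m, 1 < m → ∀ f : ℕ → Fin n,
          (∀ k l, k < m → l < m → f k = f l → k = l) → f m = f 0 →
          0 ≤ ∑ k ∈ Finset.range m, a' (f k) (f (k+1)) := by
        intro m hm f hinj hf
        obtain ⟨σ, hσne, hσsum⟩ := UCM.simple_cycle_perm a hadiag f hm hinj hf
        have hmn : m ≤ n := UCM.inj_le f hinj
        have hδle : δ ≤ ∑ i : Fin n, a i (σ i) :=
          Finset.inf'_le _ (Finset.mem_erase.mpr ⟨hσne, Finset.mem_univ _⟩)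
        have hnec : ∀ k ∈ Finset.range m, f k ≠ f (k+1) := by
          intro k hk heq
          simp only [Finset.mem_range] at hk
          rcases Nat.lt_or_ge (k+1) m with h | h
          · exact absurd (hinj k (k+1) hk h heq) (by omega)
          · have hk1 : k + 1 = m := by omega
            rw [hk1, hf] at heq
            exact absurd (hinj k 0 hk (by omega) heq) (by omega)
        have hsplit : ∑ k ∈ Finset.range m, a' (f k) (f (k+1))
            = ∑ k ∈ Finset.range m, a (f k) (f (k+1)) - m * c0 := by
          simp only [ha']
          rw [Finset.sum_sub_distrib]
          congr 1
          have hcongr : ∀ k ∈ Finset.range m,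
              (if f k = f (k+1) then (0:ℝ) else c0) = c0 := by
            intro k hk
            rw [if_neg (hnec k hk)]
          rw [Finset.sum_congr rfl hcongr, Finset.sum_const, Finset.card_range,
            nsmul_eq_mul]
        rw [hsplit, ← hσsum]
        have hmc : (m:ℝ) * c0 ≤ (n:ℝ) * c0 := by
          apply mul_le_mul_of_nonneg_right _ (le_of_lt hc0)
          exact_mod_cast hmn
        have hnne : (n:ℝ) ≠ 0 := by
          have : 0 < n := by omega
          exact_mod_cast this.ne'
        have hnc : (n:ℝ) * c0 = δ := by
          rw [hc0def]
          field_simp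
        linarith
      have Hclosed' := UCM.decomp a' ha'diag hsimple
      obtain ⟨ψ, hψ⟩ := UCM.exists_potential (by omega : 0 < n) a' (fun m _ f hf => Hclosed' m f hf)
      refine ⟨ψ, fun i j hji => ?_⟩
      have hij := hψ i j
      simp only [ha', ha] at hij
      rw [if_neg (Ne.symm hji)] at hij
      linarith
  · rintro ⟨ψ, hψ⟩
    have hweak : ∀ i j : Fin n, ⟪x i, y j⟫ - ψ j ≤ ⟪x i, y i⟫ - ψ i := by
      intro i j
      by_cases h : j = i
      · subst h; exact le_refl _
      · exact le_of_lt (hψ i j h)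
    constructor
    · exact UCM.cycmono x y (fun t => t) ψ (fun i j => hweak i j) (fun j => rfl)
    · intro σ hσ
      by_contra hσne
      have hex : ∃ i, σ i ≠ i := by
        by_contra h
        push_neg at h
        exact hσne (Equiv.ext fun i => (h i).trans (Equiv.Perm.one_apply i).symm)
      obtain ⟨i₀, hi₀⟩ := hex
      have hMpos : 0 < orderOf σ := orderOf_pos σ
      obtain ⟨M', hM'⟩ : ∃ M', orderOf σ = M' + 1 := ⟨orderOf σ - 1, by omega⟩
      set G : Fin n → ℝ := fun i => ⟪y (σ i), x (σ i)⟫ - ⟪y (σ i), x i⟫ with hG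
      have hkey : ∀ j : Fin n, ∑ k : Fin (M'+1), G ((σ ^ (k : ℕ)) j) ≤ 0 := by
        intro j
        have hp : ∀ k : Fin (M'+1),
            (σ ^ (((k + 1 : Fin (M'+1))) : ℕ)) j = σ ((σ ^ (k : ℕ)) j) := by
          intro k
          have hpow : σ ^ (((k + 1 : Fin (M'+1))) : ℕ) = σ ^ ((k : ℕ) + 1) := by
            by_cases hk : k = Fin.last M'
            · subst hk
              have hlast : (Fin.last M' + 1 : Fin (M'+1)) = 0 := by
                ext; simp [Fin.val_add_one]
              rw [hlast]
              simp only [Fin.val_zero, pow_zero, Fin.val_last]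
              rw [← hM', pow_orderOf_eq_one]
            · have hlt : k < Fin.last M' := lt_of_le_of_ne (Fin.le_last k) hk
              rw [Fin.val_add_one_of_lt hlt]
          rw [hpow, pow_succ']
          rfl
        have h := hσ M' (fun k : Fin (M'+1) => (σ ^ (k : ℕ)) j)
        refine le_trans (le_of_eq ?_) h
        apply Finset.sum_congr rfl
        intro k _
        simp only [hG]
        rw [hp k, inner_sub_right]
      have hS : (M'+1 : ℝ) * (∑ i : Fin n, G i) ≤ 0 := by
        have hsum : ∑ j : Fin n, ∑ k : Fin (M'+1), G ((σ ^ (k : ℕ)) j) ≤ 0 :=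
          Finset.sum_nonpos (fun j _ => hkey j)
        rw [Finset.sum_comm] at hsum
        have hcongr : ∀ k : Fin (M'+1), k ∈ Finset.univ →
            ∑ j : Fin n, G ((σ ^ (k : ℕ)) j) = ∑ i : Fin n, G i := by
          intro k _
          exact Equiv.sum_comp (σ ^ (k : ℕ)) G
        rw [Finset.sum_congr rfl hcongr, Finset.sum_const, Finset.card_univ,
          Fintype.card_fin] at hsum
        rw [nsmul_eq_mul] at hsum
        exact_mod_cast hsum
      have hSle : ∑ i : Fin n, G i ≤ 0 := by
        have hpos : (0:ℝ) < (M' : ℝ) + 1 := by positivity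
        nlinarith
      have hGsum : ∑ i : Fin n, G i
          = ∑ i : Fin n, ⟪x i, y i⟫ - ∑ i : Fin n, ⟪x i, y (σ i)⟫ := by
        simp only [hG]
        rw [Finset.sum_sub_distrib]
        congr 1
        · have h1 : ∑ i : Fin n, ⟪y (σ i), x (σ i)⟫ = ∑ i : Fin n, ⟪y i, x i⟫ :=
            Equiv.sum_comp σ (fun i => ⟪y i, x i⟫)
          rw [h1]
          exact Finset.sum_congr rfl (fun i _ => real_inner_comm (x i) (y i))
        · exact Finset.sum_congr rfl (fun i _ => real_inner_comm (x i) (y (σ i)))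
      have hstrict : ∑ i : Fin n, ⟪x i, y (σ i)⟫ < ∑ i : Fin n, ⟪x i, y i⟫ := by
        have hlt : ∑ i : Fin n, (⟪x i, y (σ i)⟫ - ψ (σ i))
            < ∑ i : Fin n, (⟪x i, y i⟫ - ψ i) :=
          Finset.sum_lt_sum (fun i _ => hweak i (σ i))
            ⟨i₀, Finset.mem_univ _, hψ i₀ (σ i₀) hi₀⟩
        have hψσ : ∑ i : Fin n, ψ (σ i) = ∑ i : Fin n, ψ i := Equiv.sum_comp σ ψ
        rw [Finset.sum_sub_distrib, Finset.sum_sub_distrib, hψσ] at hlt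
        linarith
      rw [hGsum] at hSle
      linarith
end

section
/- Let φ(x) = max_{1≤j≤n}(⟨x, y_j⟩ - ψ_j) with distinct y_j, suppose ⟨x_i, y_i⟩ - ψ_i > max_{j≠i}(⟨x_i, y_j⟩ - ψ_j) for distinct points x_1,...,x_n, and let ε̃_0 := min_i [(⟨x_i, y_i⟩ - ψ_i) - max_{j≠i}(⟨x_i, y_j⟩ - ψ_j)] and ε_0 := (ε̃_0/2)·min(1, 1/max_i ‖y_i‖). Then for every 0 < ε ≤ (ε_0/2)·min(1, 1/max_i ‖y_i‖) and every x in the ball B(x_i, ε), the Moreau envelope φ_ε(x) := inf_y [φ(y) + ‖y-x‖²/(2ε)] equals ⟨x, y_i⟩ - ψ_i - (ε/2)‖y_i‖², and consequently ∇φ_ε(x_i) = y_i. -/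
open scoped RealInnerProductSpace BigOperators

set_option maxHeartbeats 1000000 in
/-- with the optimal smoothing constants `ε̃₀` and `ε₀`, for every
`0 < ε ≤ (ε₀/2)·min(1, 1/max_i ‖y i‖)` and every `z` in the ball `B(x i, ε)`, the Moreau
envelope of `φ(z) = max_j (⟪z, y j⟫ - ψ j)` equals `⟪z, y i⟫ - ψ i - (ε/2)‖y i‖²`,
and consequently its gradient at `x i` is `y i`. -/
theorem moreau_envelope_interpolates
    {d n : ℕ} (hn : 1 < n) (x y : Fin n → EuclideanSpace ℝ (Fin d))
    (hx : Function.Injective x) (hy : Function.Injective y)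
    (ψ : Fin n → ℝ)
    (hψ : ∀ i j : Fin n, j ≠ i → ⟪x i, y j⟫ - ψ j < ⟪x i, y i⟫ - ψ i)
    (φ : EuclideanSpace ℝ (Fin d) → ℝ)
    (hφ : φ = fun z => ⨆ j : Fin n, (⟪z, y j⟫ - ψ j))
    (εt0 ε0 M : ℝ)
    (hM : M = ⨆ i : Fin n, ‖y i‖)
    (hεt0 : εt0 = ⨅ i : Fin n,
      ((⟪x i, y i⟫ - ψ i) - ⨆ j : {j : Fin n // j ≠ i}, (⟪x i, y (j : Fin n)⟫ - ψ (j : Fin n))))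
    (hε0 : ε0 = εt0 / 2 * min 1 (1 / M))
    (φε : ℝ → EuclideanSpace ℝ (Fin d) → ℝ)
    (hφε : φε = fun ε z => ⨅ w : EuclideanSpace ℝ (Fin d), (φ w + ‖w - z‖ ^ 2 / (2 * ε))) :
    ∀ ε : ℝ, 0 < ε → ε ≤ ε0 / 2 * min 1 (1 / M) →
      ∀ i : Fin n,
        (∀ z ∈ Metric.ball (x i) ε, φε ε z = ⟪z, y i⟫ - ψ i - ε / 2 * ‖y i‖ ^ 2) ∧
        HasGradientAt (φε ε) (y i) (x i) := by
  have hnE : Nonempty (Fin n) := ⟨⟨0, by omega⟩⟩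
  set m : ℝ := min 1 (1 / M) with hm
  -- basic facts about M
  have hMj : ∀ j, ‖y j‖ ≤ M := by
    intro j
    rw [hM]
    exact le_ciSup (f := fun i : Fin n => ‖y i‖) (Set.Finite.bddAbove (Set.finite_range _)) j
  have hM0 : 0 ≤ M := (norm_nonneg _).trans (hMj ⟨0, by omega⟩)
  -- gap estimate
  have gap : ∀ i j : Fin n, j ≠ i →
      εt0 ≤ (⟪x i, y i⟫ - ψ i) - (⟪x i, y j⟫ - ψ j) := by
    intro i j hji
    have h1 : εt0 ≤ (⟪x i, y i⟫ - ψ i) -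
        ⨆ j : {j : Fin n // j ≠ i}, (⟪x i, y (j : Fin n)⟫ - ψ (j : Fin n)) := by
      rw [hεt0]
      exact ciInf_le (Set.Finite.bddBelow (Set.finite_range _)) i
    have h2 : (⟪x i, y j⟫ - ψ j) ≤
        ⨆ j : {j : Fin n // j ≠ i}, (⟪x i, y (j : Fin n)⟫ - ψ (j : Fin n)) :=
      le_ciSup (f := fun j : {j : Fin n // j ≠ i} => (⟪x i, y (j : Fin n)⟫ - ψ (j : Fin n)))
        (Set.Finite.bddAbove (Set.finite_range _)) (⟨j, hji⟩ : {j : Fin n // j ≠ i})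
    linarith
  -- εt0 > 0
  have hεt0pos : 0 < εt0 := by
    have gpos : ∀ i : Fin n, 0 < (⟪x i, y i⟫ - ψ i) -
        ⨆ j : {j : Fin n // j ≠ i}, (⟪x i, y (j : Fin n)⟫ - ψ (j : Fin n)) := by
      intro i
      haveI : Nontrivial (Fin n) := Fin.nontrivial_iff_two_le.mpr hn
      have hne : Nonempty {j : Fin n // j ≠ i} := by
        rcases exists_ne i with ⟨j, hj⟩
        exact ⟨⟨j, hj⟩⟩
      obtain ⟨j₀, hj₀⟩ := Finite.exists_max
        (fun j : {j : Fin n // j ≠ i} => (⟪x i, y (j : Fin n)⟫ - ψ (j : Fin n)))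
      have hsup : (⨆ j : {j : Fin n // j ≠ i}, (⟪x i, y (j : Fin n)⟫ - ψ (j : Fin n)))
          ≤ ⟪x i, y (j₀ : Fin n)⟫ - ψ (j₀ : Fin n) := ciSup_le hj₀
      have := hψ i j₀ j₀.2
      linarith
    obtain ⟨i₀, hi₀⟩ := Finite.exists_min (fun i : Fin n => (⟪x i, y i⟫ - ψ i) -
        ⨆ j : {j : Fin n // j ≠ i}, (⟪x i, y (j : Fin n)⟫ - ψ (j : Fin n)))
    have : (⟪x i₀, y i₀⟫ - ψ i₀) -
        (⨆ j : {j : Fin n // j ≠ i₀}, (⟪x i₀, y (j : Fin n)⟫ - ψ (j : Fin n))) ≤ εt0 := by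
      rw [hεt0]; exact le_ciInf hi₀
    exact lt_of_lt_of_le (gpos i₀) this
  have hm0 : 0 ≤ m := by
    rcases eq_or_lt_of_le hM0 with h | h
    · simp [hm, ← h]
    · exact le_min zero_le_one (by positivity)
  have hm1 : m ≤ 1 := min_le_left _ _
  have hmM : m * M ≤ 1 := by
    rcases eq_or_lt_of_le hM0 with h | h
    · nlinarith
    · have : m ≤ 1 / M := min_le_right _ _
      calc m * M ≤ (1 / M) * M := by nlinarith
        _ = 1 := by field_simp
  intro ε hε hεle i
  have hεle' : ε ≤ εt0 * m ^ 2 / 4 := by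
    rw [hε0] at hεle; nlinarith [hεle]
  -- core claim on the ball
  have key : ∀ z ∈ Metric.ball (x i) ε, φε ε z = ⟪z, y i⟫ - ψ i - ε / 2 * ‖y i‖ ^ 2 := by
    intro z hz
    have hzd : ‖z - x i‖ < ε := by
      rw [Metric.mem_ball, dist_eq_norm] at hz; exact hz
    -- lower bound for every w
    have lb : ∀ w : EuclideanSpace ℝ (Fin d),
        ⟪z, y i⟫ - ψ i - ε / 2 * ‖y i‖ ^ 2 ≤ φ w + ‖w - z‖ ^ 2 / (2 * ε) := by
      intro w
      have h1 : ⟪w, y i⟫ - ψ i ≤ φ w := by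
        rw [hφ]
        show ⟪w, y i⟫ - ψ i ≤ ⨆ j : Fin n, (⟪w, y j⟫ - ψ j)
        exact le_ciSup (f := fun j : Fin n => (⟪w, y j⟫ - ψ j))
          (Set.Finite.bddAbove (Set.finite_range _)) i
      have hsq : (0:ℝ) ≤ ‖(w - z) + ε • y i‖ ^ 2 := sq_nonneg _
      have hexp : ‖(w - z) + ε • y i‖ ^ 2
          = ‖w - z‖ ^ 2 + 2 * (ε * ⟪w - z, y i⟫) + ε ^ 2 * ‖y i‖ ^ 2 := by
        rw [norm_add_sq_real, real_inner_smul_right, norm_smul]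
        rw [Real.norm_eq_abs, abs_of_pos hε]
        ring
      have hinn : ⟪w - z, y i⟫ = ⟪w, y i⟫ - ⟪z, y i⟫ := inner_sub_left _ _ _
      have h2 : ⟪z, y i⟫ - ψ i - ε / 2 * ‖y i‖ ^ 2 ≤ ⟪w, y i⟫ - ψ i + ‖w - z‖ ^ 2 / (2 * ε) := by
        rw [hexp, hinn] at hsq
        have h2ε : (0:ℝ) < 2 * ε := by linarith
        rw [← sub_nonneg]
        have : ⟪w, y i⟫ - ψ i + ‖w - z‖ ^ 2 / (2 * ε) - (⟪z, y i⟫ - ψ i - ε / 2 * ‖y i‖ ^ 2)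
            = (‖w - z‖ ^ 2 + 2 * (ε * (⟪w, y i⟫ - ⟪z, y i⟫)) + ε ^ 2 * ‖y i‖ ^ 2) / (2 * ε) := by
          field_simp
          ring
        rw [this]
        positivity
      linarith
    have bdd : BddBelow (Set.range fun w : EuclideanSpace ℝ (Fin d) =>
        φ w + ‖w - z‖ ^ 2 / (2 * ε)) := by
      refine ⟨⟪z, y i⟫ - ψ i - ε / 2 * ‖y i‖ ^ 2, ?_⟩
      rintro _ ⟨w, rfl⟩
      exact lb w
    set w₀ : EuclideanSpace ℝ (Fin d) := z - ε • y i with hw₀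
    -- φ w₀ = ⟪w₀, y i⟫ - ψ i
    have hφw₀ : φ w₀ = ⟪w₀, y i⟫ - ψ i := by
      rw [hφ]
      show (⨆ j : Fin n, (⟪w₀, y j⟫ - ψ j)) = ⟪w₀, y i⟫ - ψ i
      refine le_antisymm (ciSup_le ?_) (le_ciSup (f := fun j : Fin n => (⟪w₀, y j⟫ - ψ j))
        (Set.Finite.bddAbove (Set.finite_range _)) i)
      intro j
      rcases eq_or_ne j i with rfl | hj
      · exact le_rfl
      -- for j ≠ i
      have hgap := gap i j hj
      have h1 : ⟪w₀ - x i, y j - y i⟫ ≤ ‖w₀ - x i‖ * ‖y j - y i‖ := real_inner_le_norm _ _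
      have h2 : ‖y j - y i‖ ≤ 2 * M := by
        have := hMj j; have := hMj i
        calc ‖y j - y i‖ ≤ ‖y j‖ + ‖y i‖ := norm_sub_le _ _
          _ ≤ 2 * M := by linarith
      have h3 : ‖w₀ - x i‖ ≤ ε * (1 + M) := by
        have heq : w₀ - x i = (z - x i) - ε • y i := by rw [hw₀]; abel
        have hs : ‖ε • y i‖ = ε * ‖y i‖ := by
          rw [norm_smul, Real.norm_eq_abs, abs_of_pos hε]
        have h4 := norm_sub_le (z - x i) (ε • y i)
        have h5 := hMj i
        have h6 : ε * ‖y i‖ ≤ ε * M := by nlinarith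
        rw [heq]
        nlinarith [h4]
      have h4 : ⟪w₀ - x i, y j - y i⟫ ≤ εt0 := by
        have hn1 : (0:ℝ) ≤ ‖w₀ - x i‖ := norm_nonneg _
        have hn2 : (0:ℝ) ≤ ‖y j - y i‖ := norm_nonneg _
        have hprod : ‖w₀ - x i‖ * ‖y j - y i‖ ≤ ε * (1 + M) * (2 * M) :=
          mul_le_mul h3 h2 hn2 (mul_nonneg (le_of_lt hε) (by linarith))
        have key2 : (m * M) * (m + m * M) ≤ 2 := by nlinarith [mul_nonneg hm0 hM0]
        have hpos : (0:ℝ) ≤ (1 + M) * (2 * M) := by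
          have : (0:ℝ) ≤ 1 + M := by linarith
          have : (0:ℝ) ≤ 2 * M := by linarith
          nlinarith
        have e1 : ε * ((1 + M) * (2 * M)) ≤ (εt0 * m ^ 2 / 4) * ((1 + M) * (2 * M)) :=
          mul_le_mul_of_nonneg_right hεle' hpos
        have e2 : (εt0 * m ^ 2 / 4) * ((1 + M) * (2 * M)) = εt0 / 2 * ((m * M) * (m + m * M)) := by
          ring
        have e3 : εt0 / 2 * ((m * M) * (m + m * M)) ≤ εt0 / 2 * 2 :=
          mul_le_mul_of_nonneg_left key2 (by linarith)
        have e0 : ε * (1 + M) * (2 * M) = ε * ((1 + M) * (2 * M)) := by ring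
        have hfin : ε * (1 + M) * (2 * M) ≤ εt0 := by linarith
        linarith
      have hexpand : ⟪w₀ - x i, y j - y i⟫
          = (⟪w₀, y j⟫ - ψ j) - (⟪w₀, y i⟫ - ψ i)
            - ((⟪x i, y j⟫ - ψ j) - (⟪x i, y i⟫ - ψ i)) := by
        rw [inner_sub_left, inner_sub_right, inner_sub_right]
        ring
      rw [hexpand] at h4
      linarith
    -- value at w₀
    have hval : φ w₀ + ‖w₀ - z‖ ^ 2 / (2 * ε) = ⟪z, y i⟫ - ψ i - ε / 2 * ‖y i‖ ^ 2 := by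
      have h1 : w₀ - z = -(ε • y i) := by rw [hw₀]; abel
      have h2 : ‖w₀ - z‖ ^ 2 = ε ^ 2 * ‖y i‖ ^ 2 := by
        rw [h1, norm_neg, norm_smul, Real.norm_eq_abs, abs_of_pos hε]; ring
      have h3 : ⟪w₀, y i⟫ = ⟪z, y i⟫ - ε * ‖y i‖ ^ 2 := by
        rw [hw₀, inner_sub_left, real_inner_smul_left, real_inner_self_eq_norm_sq]
      rw [hφw₀, h2, h3]
      field_simp
      ring
    rw [hφε]
    refine le_antisymm ?_ (le_ciInf lb)
    calc (⨅ w : EuclideanSpace ℝ (Fin d), (φ w + ‖w - z‖ ^ 2 / (2 * ε)))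
        ≤ φ w₀ + ‖w₀ - z‖ ^ 2 / (2 * ε) := ciInf_le bdd w₀
      _ = _ := hval
  refine ⟨key, ?_⟩
  -- gradient
  have hev : φε ε =ᶠ[nhds (x i)] fun z => ⟪z, y i⟫ - ψ i - ε / 2 * ‖y i‖ ^ 2 := by
    filter_upwards [Metric.ball_mem_nhds (x i) hε] with z hz using key z hz
  rw [hasGradientAt_iff_hasFDerivAt]
  refine HasFDerivAt.congr_of_eventuallyEq ?_ hev
  have heq : (fun z : EuclideanSpace ℝ (Fin d) => ⟪z, y i⟫ - ψ i - ε / 2 * ‖y i‖ ^ 2)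
      = fun z : EuclideanSpace ℝ (Fin d) =>
        (InnerProductSpace.toDual ℝ (EuclideanSpace ℝ (Fin d)) (y i)) z
          - ψ i - ε / 2 * ‖y i‖ ^ 2 := by
    funext z
    rw [InnerProductSpace.toDual_apply_apply, real_inner_comm]
  rw [heq]
  exact ((InnerProductSpace.toDual ℝ (EuclideanSpace ℝ (Fin d)) (y i)).hasFDerivAt.sub_const
    (ψ i)).sub_const (ε / 2 * ‖y i‖ ^ 2)
end

section
/- Let φ: R^d → R be convex, finite, and differentiable everywhere (so ∇φ = F). Let x_n = λ_n u_n with λ_n → ∞, ‖u_n‖ = 1, u_n → u, and suppose that ‖∇φ(x)‖ ≤ 1 for all x and that for every w with 0 < ‖w‖ < 1 there exists a point z_w with ∇φ(z_w) = w. Then ∇φ(x_n) → u as n → ∞. -/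
open scoped RealInnerProductSpace BigOperators
open Filter

private lemma subgrad' {d : ℕ} {φ : EuclideanSpace ℝ (Fin d) → ℝ}
    (hφ : ConvexOn ℝ Set.univ φ) {x y gx : EuclideanSpace ℝ (Fin d)}
    (hgx : HasGradientAt φ gx x) : ⟪gx, y - x⟫ ≤ φ y - φ x := by
  set ψ : ℝ → ℝ := fun t => φ (x + t • (y - x)) with hψ
  have hconv : ConvexOn ℝ Set.univ ψ := by
    have := hφ.comp_affineMap (AffineMap.lineMap x y)
    simp only [Set.preimage_univ] at this
    have e : ψ = φ ∘ AffineMap.lineMap x y := by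
      funext t
      simp [ψ, AffineMap.lineMap_apply, add_comm]
    rw [e]; exact this
  have hc : HasDerivAt (fun t : ℝ => x + t • (y - x)) (y - x) 0 := by
    simpa using ((hasDerivAt_id (0:ℝ)).smul_const (y - x)).const_add x
  have hd : HasDerivAt ψ ⟪gx, y - x⟫ 0 := by
    have h1 : HasDerivAt (fun t : ℝ => φ (x + t • (y - x)))
        ((InnerProductSpace.toDual ℝ (EuclideanSpace ℝ (Fin d))) gx (y - x)) 0 :=
      HasFDerivAt.comp_hasDerivAt 0 (by simpa using hgx.hasFDerivAt) hc
    simpa [ψ, InnerProductSpace.toDual_apply_apply] using h1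
  have := hconv.le_slope_of_hasDerivAt (Set.mem_univ 0) (Set.mem_univ 1) one_pos hd
  simpa [slope_def_field, ψ] using this

private lemma mono' {d : ℕ} {φ : EuclideanSpace ℝ (Fin d) → ℝ}
    (hφ : ConvexOn ℝ Set.univ φ) {g : EuclideanSpace ℝ (Fin d) → EuclideanSpace ℝ (Fin d)}
    (hg : ∀ z, HasGradientAt φ (g z) z) (x y : EuclideanSpace ℝ (Fin d)) :
    0 ≤ ⟪x - y, g x - g y⟫ := by
  have h1 := subgrad' hφ (hg x) (y := y)
  have h2 := subgrad' hφ (hg y) (y := x)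
  have e : ⟪x - y, g x - g y⟫ = -⟪g x, y - x⟫ - ⟪g y, x - y⟫ := by
    rw [real_inner_comm]
    simp only [inner_sub_left, inner_sub_right]
    ring
  rw [e]; linarith

/-- if `φ` is convex, everywhere differentiable with gradient `g` satisfying
`‖g z‖ ≤ 1` and whose range covers the punctured open unit ball, and if `x n = λ n • u n`
with `λ n → ∞`, `‖u n‖ = 1` and `u n → u`, then `g (x n) → u`. -/
theorem gradient_tendsto_radial_direction
    {d : ℕ} (φ : EuclideanSpace ℝ (Fin d) → ℝ)
    (hφ : ConvexOn ℝ Set.univ φ)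
    (g : EuclideanSpace ℝ (Fin d) → EuclideanSpace ℝ (Fin d))
    (hg : ∀ z, HasGradientAt φ (g z) z)
    (hg1 : ∀ z, ‖g z‖ ≤ 1)
    (hsurj : ∀ w : EuclideanSpace ℝ (Fin d), 0 < ‖w‖ → ‖w‖ < 1 → ∃ z, g z = w)
    (lam : ℕ → ℝ) (u : ℕ → EuclideanSpace ℝ (Fin d)) (ulim : EuclideanSpace ℝ (Fin d))
    (hlam : Tendsto lam atTop atTop)
    (hu : ∀ n, ‖u n‖ = 1) (huconv : Tendsto u atTop (nhds ulim)) :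
    Tendsto (fun n => g (lam n • u n)) atTop (nhds ulim) := by
  have hnormu : ‖ulim‖ = 1 := by
    have h1 : Tendsto (fun n => ‖u n‖) atTop (nhds ‖ulim‖) := huconv.norm
    have h2 : Tendsto (fun n => ‖u n‖) atTop (nhds 1) := by
      simpa [hu] using (tendsto_const_nhds : Tendsto (fun _ : ℕ => (1:ℝ)) atTop (nhds 1))
    exact tendsto_nhds_unique h1 h2
  -- key lower bound
  have key : ∀ c : ℝ, c < 1 → ∀ᶠ n in atTop, c < ⟪u n, g (lam n • u n)⟫ := by
    intro c hc
    set t : ℝ := (max c 0 + 1) / 2 with ht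
    have hmax0 : (0:ℝ) ≤ max c 0 := le_max_right _ _
    have hmax1 : max c 0 < 1 := max_lt hc one_pos
    have ht0 : 0 < t := by rw [ht]; linarith
    have ht1 : t < 1 := by rw [ht]; linarith
    have htc : c < t := lt_of_le_of_lt (le_max_left c 0) (by rw [ht]; linarith)
    have hnw : ‖t • ulim‖ = t := by
      rw [norm_smul, hnormu, Real.norm_eq_abs, abs_of_pos ht0, mul_one]
    obtain ⟨z, hz⟩ := hsurj (t • ulim) (by rw [hnw]; exact ht0) (by rw [hnw]; exact ht1)
    have hη : (0:ℝ) < (t - c) / (2 * t) := div_pos (by linarith) (by linarith)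
    have hinnlim : Tendsto (fun n => ⟪u n, ulim⟫) atTop (nhds 1) := by
      have : Tendsto (fun n => ⟪u n, ulim⟫) atTop (nhds ⟪ulim, ulim⟫) :=
        Filter.Tendsto.inner huconv tendsto_const_nhds
      rwa [real_inner_self_eq_norm_sq, hnormu, one_pow] at this
    have hev1 : ∀ᶠ n in atTop, 1 - (t - c) / (2 * t) < ⟪u n, ulim⟫ :=
      hinnlim.eventually (eventually_gt_nhds (by linarith))
    have hev2 : ∀ᶠ n in atTop, max (4 * ‖z‖ / (t - c)) 1 < lam n :=
      hlam.eventually_gt_atTop _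
    filter_upwards [hev1, hev2] with n h1 h2
    set G := g (lam n • u n) with hG
    have hm : 0 ≤ ⟪lam n • u n - z, G - t • ulim⟫ := by
      have := mono' hφ hg (lam n • u n) z
      rwa [hz] at this
    have hexp : ⟪lam n • u n - z, G - t • ulim⟫
        = lam n * (⟪u n, G⟫ - t * ⟪u n, ulim⟫) - ⟪z, G - t • ulim⟫ := by
      simp only [inner_sub_left, inner_sub_right, real_inner_smul_left, real_inner_smul_right]
      ring
    have hCS : |⟪z, G - t • ulim⟫| ≤ ‖z‖ * 2 := by
      refine le_trans (abs_real_inner_le_norm _ _) ?_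
      have : ‖G - t • ulim‖ ≤ 2 := by
        calc ‖G - t • ulim‖ ≤ ‖G‖ + ‖t • ulim‖ := norm_sub_le _ _
          _ ≤ 1 + 1 := add_le_add (hg1 _) (by rw [hnw]; linarith)
          _ = 2 := by norm_num
      exact mul_le_mul_of_nonneg_left this (norm_nonneg _)
    have hL1 : (1:ℝ) < lam n := lt_of_le_of_lt (le_max_right _ _) h2
    have hL0 : (0:ℝ) < lam n := by linarith
    have hLz : 4 * ‖z‖ / (t - c) < lam n := lt_of_le_of_lt (le_max_left _ _) h2
    have hzL : 4 * ‖z‖ < lam n * (t - c) := by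
      rw [div_lt_iff₀ (by linarith : (0:ℝ) < t - c)] at hLz
      linarith
    have habs := abs_le.mp hCS
    have hstep : lam n * (⟪u n, G⟫ - t * ⟪u n, ulim⟫) ≥ -(‖z‖ * 2) := by
      have := hexp ▸ hm
      linarith [habs.1, habs.2]
    -- combine
    have hb : t * ⟪u n, ulim⟫ > t - (t - c) / 2 := by
      have := mul_lt_mul_of_pos_left h1 ht0
      have heq : t * (1 - (t - c) / (2 * t)) = t - (t - c) / 2 := by
        field_simp
      linarith [heq ▸ this]
    have hfin : ⟪u n, G⟫ - t * ⟪u n, ulim⟫ ≥ -(2 * ‖z‖) / lam n := by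
      rw [ge_iff_le, div_le_iff₀ hL0] at *
      nlinarith [hstep]
    have hsmall : -((t - c) / 2) < -(2 * ‖z‖) / lam n := by
      rw [neg_div, neg_lt_neg_iff, div_lt_iff₀ hL0]
      nlinarith
    linarith
  -- inner product tends to 1
  have hinner : Tendsto (fun n => ⟪u n, g (lam n • u n)⟫) atTop (nhds 1) := by
    refine tendsto_order.mpr ⟨fun c hc => key c hc, fun c hc => Eventually.of_forall fun n => ?_⟩
    have : ⟪u n, g (lam n • u n)⟫ ≤ ‖u n‖ * ‖g (lam n • u n)‖ := real_inner_le_norm _ _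
    have hb : ‖u n‖ * ‖g (lam n • u n)‖ ≤ 1 := by
      rw [hu n, one_mul]; exact hg1 _
    linarith
  -- norm squared → 0
  have hsq : Tendsto (fun n => ‖g (lam n • u n) - u n‖ ^ 2) atTop (nhds 0) := by
    have hbound : ∀ n, ‖g (lam n • u n) - u n‖ ^ 2 ≤ 2 - 2 * ⟪u n, g (lam n • u n)⟫ := by
      intro n
      have hns := @norm_sub_sq_real (EuclideanSpace ℝ (Fin d)) _ _ (g (lam n • u n)) (u n)
      have hg2 : ‖g (lam n • u n)‖ ^ 2 ≤ 1 :=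
        pow_le_one₀ (norm_nonneg _) (hg1 _)
      rw [real_inner_comm] at hns
      rw [hns, hu n]
      nlinarith
    have hlim2 : Tendsto (fun n => 2 - 2 * ⟪u n, g (lam n • u n)⟫) atTop (nhds 0) := by
      have := (hinner.const_mul 2).const_sub 2
      simpa using this
    exact squeeze_zero (fun n => by positivity) hbound hlim2
  have hnorm : Tendsto (fun n => ‖g (lam n • u n) - u n‖) atTop (nhds 0) := by
    have := hsq.sqrt
    simpa [Real.sqrt_sq (norm_nonneg _)] using this
  have hdiff : Tendsto (fun n => g (lam n • u n) - u n) atTop (nhds 0) :=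
    tendsto_zero_iff_norm_tendsto_zero.mpr hnorm
  have := hdiff.add huconv
  simpa using this
end

section
/- Let φ: R^d → R be convex and 1-Lipschitz, suppose D ⊆ R^d is such that φ is differentiable on D with ‖∇φ(x)‖ < 1 only at points of an open set Ω on which ∇φ is injective, and let x ∉ Ω̄ be a point where the subdifferential ∂φ(x) contains two distinct points u_1 ≠ u_2, each of norm 1. Then (1-t)u_1 + t u_2 ∈ ∂φ(x) for all t ∈ [0,1] and ‖(1-t)u_1 + t u_2‖ < 1 for t ∈ (0,1). Consequently, if additionally every subgradient of φ of norm < 1 is attained as ∇φ(x_0) at some x_0 ∈ Ω, injectivity of ∇φ on Ω forces ∂φ(x) to be a singleton of norm 1 at every x ∉ Ω̄; hence φ is differentiable at every such x with ‖∇φ(x)‖ = 1. -/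
open scoped RealInnerProductSpace

/-- The subdifferential of `φ` at `x`. -/
def SubdiffAt {d : ℕ} (φ : EuclideanSpace ℝ (Fin d) → ℝ) (x : EuclideanSpace ℝ (Fin d)) :
    Set (EuclideanSpace ℝ (Fin d)) :=
  {u | ∀ z, ⟪u, z - x⟫ ≤ φ z - φ x}

/-- Existence of a subgradient for a convex continuous function on Euclidean space. -/
lemma subdiff_nonempty {d : ℕ} (φ : EuclideanSpace ℝ (Fin d) → ℝ)
    (hconv : ConvexOn ℝ Set.univ φ) (hlip : LipschitzWith 1 φ)
    (x : EuclideanSpace ℝ (Fin d)) : (SubdiffAt φ x).Nonempty := by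
  classical
  set s : Set (EuclideanSpace ℝ (Fin d) × ℝ) := {p | φ p.1 < p.2} with hs_def
  have hφc : Continuous φ := hlip.continuous
  have hs_open : IsOpen s := isOpen_lt (hφc.comp continuous_fst) continuous_snd
  have hs_conv : Convex ℝ s := by
    intro a ha b hb α β hα hβ hαβ
    have hc : φ (α • a.1 + β • b.1) ≤ α * φ a.1 + β * φ b.1 := by
      have := hconv.2 (Set.mem_univ a.1) (Set.mem_univ b.1) hα hβ hαβ
      simpa [smul_eq_mul] using this
    have ha' : φ a.1 < a.2 := ha
    have hb' : φ b.1 < b.2 := hb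
    show φ (α • a.1 + β • b.1) < α * a.2 + β * b.2
    rcases eq_or_lt_of_le hα with h0 | h0
    · have hβ1 : β = 1 := by linarith
      nlinarith
    · nlinarith [mul_le_mul_of_nonneg_left hb'.le hβ]
  have hxs : ((x, φ x) : EuclideanSpace ℝ (Fin d) × ℝ) ∉ s := by simp [hs_def]
  obtain ⟨f, hf⟩ := geometric_hahn_banach_open_point hs_conv hs_open hxs
  set c : ℝ := f (0, 1) with hc_def
  set g : EuclideanSpace ℝ (Fin d) → ℝ := fun z => f (z, 0) with hg_def
  have hsplit : ∀ (z : EuclideanSpace ℝ (Fin d)) (t : ℝ), f (z, t) = g z + t * c := by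
    intro z t
    have : ((z, t) : EuclideanSpace ℝ (Fin d) × ℝ) = (z, 0) + t • ((0 : EuclideanSpace ℝ (Fin d)), (1 : ℝ)) := by
      simp [Prod.ext_iff]
    rw [this, map_add, map_smul]
    simp [hg_def, hc_def, smul_eq_mul]
  have hcneg : c < 0 := by
    have h1 : f (x, φ x + 1) < f (x, φ x) := hf _ (by simp [hs_def])
    rw [hsplit, hsplit] at h1
    linarith
  have hkey : ∀ z : EuclideanSpace ℝ (Fin d), g z + φ z * c ≤ g x + φ x * c := by
    intro z
    have h2 : ∀ ε > (0 : ℝ), g z + φ z * c - ε ≤ g x + φ x * c := by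
      intro ε hε
      have hεc : (0 : ℝ) < ε / (-c) := div_pos hε (by linarith)
      have h3 : f (z, φ z + ε / (-c)) < f (x, φ x) := hf _ (by simp [hs_def, hεc])
      rw [hsplit, hsplit] at h3
      have hc0 : c ≠ 0 := ne_of_lt hcneg
      have hcc : c / -c = -1 := by rw [div_neg, div_self hc0]
      have : (ε / (-c)) * c = -ε := by
        rw [div_mul_eq_mul_div, mul_div_assoc, hcc]; ring
      nlinarith
    exact le_of_forall_sub_le h2
  set G : EuclideanSpace ℝ (Fin d) →L[ℝ] ℝ :=
    f.comp (ContinuousLinearMap.inl ℝ (EuclideanSpace ℝ (Fin d)) ℝ) with hG_def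
  have hG : ∀ z : EuclideanSpace ℝ (Fin d), G z = g z := fun z => rfl
  set v : EuclideanSpace ℝ (Fin d) :=
    (InnerProductSpace.toDual ℝ (EuclideanSpace ℝ (Fin d))).symm G with hv_def
  have hvG : ∀ z : EuclideanSpace ℝ (Fin d), ⟪v, z⟫ = g z := by
    intro z
    rw [hv_def, InnerProductSpace.toDual_symm_apply]
    exact hG z
  refine ⟨(-c)⁻¹ • v, fun z => ?_⟩
  have hinner : ⟪(-c)⁻¹ • v, z - x⟫ = (-c)⁻¹ * (g z - g x) := by
    rw [real_inner_smul_left, inner_sub_right, hvG, hvG]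
  rw [hinner]
  have h4 := hkey z
  have h5 : g z - g x ≤ (φ x - φ z) * c := by linarith
  have hcpos : (0 : ℝ) < -c := by linarith
  have h6 : (-c)⁻¹ * (g z - g x) ≤ (-c)⁻¹ * ((φ x - φ z) * c) :=
    mul_le_mul_of_nonneg_left h5 (inv_nonneg.2 hcpos.le)
  have h7 : (-c)⁻¹ * ((φ x - φ z) * c) = φ z - φ x := by
    field_simp
    rw [mul_div_cancel_left₀ _ hcneg.ne]
    ring
  linarith

/-- A subgradient of a 1-Lipschitz function has norm at most 1. -/
lemma subdiff_norm_le {d : ℕ} {φ : EuclideanSpace ℝ (Fin d) → ℝ}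
    (hlip : LipschitzWith 1 φ) {x u : EuclideanSpace ℝ (Fin d)}
    (hu : u ∈ SubdiffAt φ x) : ‖u‖ ≤ 1 := by
  have h1 : ⟪u, (x + u) - x⟫ ≤ φ (x + u) - φ x := hu (x + u)
  have h2 : (x + u) - x = u := by abel
  rw [h2, real_inner_self_eq_norm_sq] at h1
  have h3 : φ (x + u) - φ x ≤ ‖u‖ := by
    have h5 : |φ (x + u) - φ x| ≤ ‖u‖ := by
      have := hlip.dist_le_mul (x + u) x
      rw [Real.dist_eq, dist_eq_norm, h2] at this
      simpa using this
    exact (abs_le.1 h5).2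
  by_cases h0 : ‖u‖ = 0
  · simp [h0]
  · have hpos : 0 < ‖u‖ := lt_of_le_of_ne (norm_nonneg u) (Ne.symm h0)
    nlinarith

/-- No subgradient of norm `< 1` can occur outside `closure Ω`. -/
lemma no_small_subgradient {d : ℕ} {φ : EuclideanSpace ℝ (Fin d) → ℝ}
    (hconv : ConvexOn ℝ Set.univ φ)
    {Ω : Set (EuclideanSpace ℝ (Fin d))} (hΩ : IsOpen Ω)
    (hattain : ∀ x u, u ∈ SubdiffAt φ x → ‖u‖ < 1 → ∃ x0 ∈ Ω, SubdiffAt φ x0 = {u})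
    (hinj : ∀ x1 ∈ Ω, ∀ x2 ∈ Ω, ∀ u : EuclideanSpace ℝ (Fin d),
      SubdiffAt φ x1 = {u} → SubdiffAt φ x2 = {u} → x1 = x2)
    {x u : EuclideanSpace ℝ (Fin d)} (hx : x ∉ closure Ω)
    (hu : u ∈ SubdiffAt φ x) (hun : ‖u‖ < 1) : False := by
  obtain ⟨x0, hx0Ω, hx0⟩ := hattain x u hu hun
  have hu0 : u ∈ SubdiffAt φ x0 := by rw [hx0]; rfl
  have hne : x ≠ x0 := by
    rintro rfl; exact hx (subset_closure hx0Ω)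
  have hd : (0 : ℝ) < ‖x - x0‖ := by
    rw [norm_pos_iff]; exact sub_ne_zero.2 hne
  have heq : φ x - φ x0 = ⟪u, x - x0⟫ := by
    have h1 : ⟪u, x - x0⟫ ≤ φ x - φ x0 := hu0 x
    have h2 : ⟪u, x0 - x⟫ ≤ φ x0 - φ x := hu x0
    have h3 : (x0 - x : EuclideanSpace ℝ (Fin d)) = -(x - x0) := by abel
    rw [h3, inner_neg_right] at h2
    linarith
  obtain ⟨ε, hε, hball⟩ := Metric.isOpen_iff.1 hΩ x0 hx0Ω
  set s : ℝ := min (ε / (2 * ‖x - x0‖)) (1 / 2) with hs_def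
  have hs_pos : 0 < s := lt_min (div_pos hε (by positivity)) (by norm_num)
  have hs_lt : s < 1 := lt_of_le_of_lt (min_le_right _ _) (by norm_num)
  set y : EuclideanSpace ℝ (Fin d) := x0 + s • (x - x0) with hy_def
  have hyx0 : y - x0 = s • (x - x0) := by rw [hy_def]; abel
  have hy_mem : y ∈ Ω := by
    apply hball
    rw [Metric.mem_ball, dist_eq_norm, hy_def]
    have : x0 + s • (x - x0) - x0 = s • (x - x0) := by abel
    rw [this, norm_smul, Real.norm_eq_abs, abs_of_pos hs_pos]
    have h1 : s ≤ ε / (2 * ‖x - x0‖) := min_le_left _ _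
    have h2 : s * ‖x - x0‖ ≤ (ε / (2 * ‖x - x0‖)) * ‖x - x0‖ :=
      mul_le_mul_of_nonneg_right h1 hd.le
    have h3 : (ε / (2 * ‖x - x0‖)) * ‖x - x0‖ = ε / 2 := by field_simp
    linarith
  have hy_ne : y ≠ x0 := by
    intro h
    have : s • (x - x0) = 0 := by rw [← hyx0, h, sub_self]
    rcases smul_eq_zero.1 this with h' | h'
    · exact absurd h' (ne_of_gt hs_pos)
    · exact hne (sub_eq_zero.1 h')
  -- φ y = φ x0 + s * ⟪u, x - x0⟫
  have hycombo : y = (1 - s) • x0 + s • x := by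
    rw [hy_def]
    module
  have hφy : φ y = φ x0 + s * ⟪u, x - x0⟫ := by
    have hub : φ y ≤ (1 - s) * φ x0 + s * φ x := by
      rw [hycombo]
      exact hconv.2 (Set.mem_univ x0) (Set.mem_univ x) (by linarith) hs_pos.le (by ring)
    have hlb : ⟪u, y - x0⟫ ≤ φ y - φ x0 := hu0 y
    rw [hyx0, real_inner_smul_right] at hlb
    have : (1 - s) * φ x0 + s * φ x = φ x0 + s * (φ x - φ x0) := by ring
    rw [this, heq] at hub
    linarith
  -- u is a subgradient at y
  have huy : u ∈ SubdiffAt φ y := by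
    intro z
    have h1 : ⟪u, z - x0⟫ ≤ φ z - φ x0 := hu0 z
    have h2 : (z - y : EuclideanSpace ℝ (Fin d)) = (z - x0) - (y - x0) := by abel
    rw [h2, inner_sub_right, hyx0, real_inner_smul_right, hφy]
    linarith
  -- the subdifferential at y is exactly {u}
  have hsub : SubdiffAt φ y = {u} := by
    ext v
    simp only [Set.mem_singleton_iff]
    constructor
    · intro hv
      have hv1 : ⟪v, x0 - y⟫ ≤ φ x0 - φ y := hv x0
      have e1 : (x0 - y : EuclideanSpace ℝ (Fin d)) = -(s • (x - x0)) := by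
        rw [← hyx0]; abel
      rw [e1, inner_neg_right, real_inner_smul_right, hφy] at hv1
      have hge : ⟪u, x - x0⟫ ≤ ⟪v, x - x0⟫ := by
        have hmul : s * ⟪u, x - x0⟫ ≤ s * ⟪v, x - x0⟫ := by linarith
        exact le_of_mul_le_mul_left hmul hs_pos
      have hv2 : ⟪v, x - y⟫ ≤ φ x - φ y := hv x
      have e2 : (x - y : EuclideanSpace ℝ (Fin d)) = (1 - s) • (x - x0) := by
        rw [hy_def]; module
      rw [e2, real_inner_smul_right, hφy] at hv2
      have hle : ⟪v, x - x0⟫ ≤ ⟪u, x - x0⟫ := by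
        have h1s : 0 < 1 - s := by linarith
        have hmul : (1 - s) * ⟪v, x - x0⟫ ≤ (1 - s) * ⟪u, x - x0⟫ := by
          linarith [hv2, heq]
        exact le_of_mul_le_mul_left hmul h1s
      have hvu : ⟪v, x - x0⟫ = ⟪u, x - x0⟫ := le_antisymm hle hge
      -- v is a subgradient at x0, hence v = u
      have hvx0 : v ∈ SubdiffAt φ x0 := by
        intro z
        have h1 : ⟪v, z - y⟫ ≤ φ z - φ y := hv z
        have e3 : (z - x0 : EuclideanSpace ℝ (Fin d)) = (z - y) + (y - x0) := by abel
        rw [e3, inner_add_right, hyx0, real_inner_smul_right, hvu]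
        linarith [h1, hφy]
      rw [hx0] at hvx0
      exact hvx0
    · rintro rfl; exact huy
  exact hy_ne (hinj x0 hx0Ω y hy_mem u hx0 hsub).symm

/-- Convex combinations of subgradients are subgradients. -/
lemma combo_mem_subdiff {d : ℕ} {φ : EuclideanSpace ℝ (Fin d) → ℝ}
    {x u1 u2 : EuclideanSpace ℝ (Fin d)}
    (h1 : u1 ∈ SubdiffAt φ x) (h2 : u2 ∈ SubdiffAt φ x) {t : ℝ}
    (ht0 : 0 ≤ t) (ht1 : t ≤ 1) : (1 - t) • u1 + t • u2 ∈ SubdiffAt φ x := by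
  intro z
  rw [inner_add_left, real_inner_smul_left, real_inner_smul_left]
  have a1 := h1 z
  have a2 := h2 z
  nlinarith [mul_le_mul_of_nonneg_left a1 (by linarith : (0:ℝ) ≤ 1 - t),
    mul_le_mul_of_nonneg_left a2 ht0]

/-- for a convex 1-Lipschitz `φ` whose gradient is injective on an open set
`Ω` and attains every subgradient of norm `< 1` on `Ω`, at any point `x` outside the
closure of `Ω`: (a) if `u₁ ≠ u₂` are two unit-norm subgradients at `x`, then every convex
combination is again a subgradient, of norm `< 1` strictly between the endpoints; (b) the
subdifferential at `x` is a singleton of norm `1`, i.e. `φ` is differentiable there with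
`‖∇φ(x)‖ = 1`. -/
theorem subdifferential_singleton_outside_support
    {d : ℕ} (φ : EuclideanSpace ℝ (Fin d) → ℝ)
    (hconv : ConvexOn ℝ Set.univ φ) (hlip : LipschitzWith 1 φ)
    (Ω : Set (EuclideanSpace ℝ (Fin d))) (hΩ : IsOpen Ω)
    (hattain : ∀ x u, u ∈ SubdiffAt φ x → ‖u‖ < 1 → ∃ x0 ∈ Ω, SubdiffAt φ x0 = {u})
    (hinj : ∀ x1 ∈ Ω, ∀ x2 ∈ Ω, ∀ u : EuclideanSpace ℝ (Fin d),
      SubdiffAt φ x1 = {u} → SubdiffAt φ x2 = {u} → x1 = x2)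
    (x : EuclideanSpace ℝ (Fin d)) (hx : x ∉ closure Ω) :
    (∀ u1 u2, u1 ∈ SubdiffAt φ x → u2 ∈ SubdiffAt φ x → u1 ≠ u2 →
      ‖u1‖ = 1 → ‖u2‖ = 1 →
        (∀ t ∈ Set.Icc (0 : ℝ) 1, (1 - t) • u1 + t • u2 ∈ SubdiffAt φ x) ∧
        (∀ t ∈ Set.Ioo (0 : ℝ) 1, ‖(1 - t) • u1 + t • u2‖ < 1)) ∧
    (∃ u, SubdiffAt φ x = {u} ∧ ‖u‖ = 1) := by
  constructor
  · intro u1 u2 h1 h2 hne hn1 hn2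
    refine ⟨fun t ht => combo_mem_subdiff h1 h2 ht.1 ht.2, fun t ht => ?_⟩
    exact norm_combo_lt_of_ne hn1.le hn2.le hne (by linarith [ht.2]) ht.1 (by ring)
  · obtain ⟨u, hu⟩ := subdiff_nonempty φ hconv hlip x
    have hule : ‖u‖ ≤ 1 := subdiff_norm_le hlip hu
    have hu1 : ‖u‖ = 1 := by
      rcases lt_or_eq_of_le hule with h | h
      · exact absurd (no_small_subgradient hconv hΩ hattain hinj hx hu h) (fun h => h)
      · exact h
    refine ⟨u, ?_, hu1⟩
    ext v
    simp only [Set.mem_singleton_iff]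
    constructor
    · intro hv
      by_contra hvu
      have hvle : ‖v‖ ≤ 1 := subdiff_norm_le hlip hv
      have hv1 : ‖v‖ = 1 := by
        rcases lt_or_eq_of_le hvle with h | h
        · exact (no_small_subgradient hconv hΩ hattain hinj hx hv h).elim
        · exact h
      have hmem : (1 - (1/2 : ℝ)) • v + (1/2 : ℝ) • u ∈ SubdiffAt φ x :=
        combo_mem_subdiff hv hu (by norm_num) (by norm_num)
      have hnorm : ‖(1 - (1/2 : ℝ)) • v + (1/2 : ℝ) • u‖ < 1 :=
        norm_combo_lt_of_ne hv1.le hu1.le hvu (by norm_num) (by norm_num) (by ring)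
      exact no_small_subgradient hconv hΩ hattain hinj hx hmem hnorm
    · rintro rfl; exact hu
end

section
/- Let f_{i,j}(ψ) := ψ_i - ψ_j - c_{i,j} for i ≠ j in {1,...,n}, where c_{i,j} := ⟨x_i, y_i - y_j⟩. Exactly one of the following holds: (a) there exists ψ ∈ R^n with f_{i,j}(ψ) < 0 for all i ≠ j; or (b) there exists a cycle i_0, i_1, ..., i_m, i_0 of distinct indices with c_{i_0,i_1} + c_{i_1,i_2} + ... + c_{i_m,i_0} ≤ 0. Consequently, strict cyclical monotonicity (every nontrivial cycle sum Σ ⟨x_{i_k}, y_{i_k} - y_{i_{k+1}}⟩ > 0) is equivalent to the existence of weights ψ_1,...,ψ_n with ⟨x_i, y_i - y_j⟩ > ψ_i - ψ_j for all i ≠ j. -/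
open scoped RealInnerProductSpace BigOperators

namespace FarkasAux

variable {n : ℕ}

/-- cost of a walk given edge costs -/
def pcost (γ : Fin n → Fin n → ℝ) : List (Fin n) → ℝ
  | [] => 0
  | [_] => 0
  | a :: b :: t => γ a b + pcost γ (b :: t)

@[simp] lemma pcost_nil (γ : Fin n → Fin n → ℝ) : pcost γ [] = 0 := rfl
@[simp] lemma pcost_single (γ : Fin n → Fin n → ℝ) (a : Fin n) : pcost γ [a] = 0 := rfl
lemma pcost_cons_cons (γ : Fin n → Fin n → ℝ) (a b : Fin n) (t : List (Fin n)) :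
    pcost γ (a :: b :: t) = γ a b + pcost γ (b :: t) := rfl

lemma pcost_append_singleton (γ : Fin n → Fin n → ℝ) (a : Fin n) :
    ∀ (l : List (Fin n)) (h : l ≠ []), pcost γ (l ++ [a]) = pcost γ l + γ (l.getLast h) a
  | [], h => absurd rfl h
  | [x], _ => by simp [pcost_cons_cons]
  | x :: y :: t, _ => by
      have := pcost_append_singleton γ a (y :: t) (by simp)
      simp only [List.cons_append, pcost_cons_cons] at this ⊢
      rw [this, List.getLast_cons (a := x) (l := y :: t) (by simp)]
      ring

lemma pcost_split (γ : Fin n → Fin n → ℝ) (a : Fin n) (l₂ : List (Fin n)) :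
    ∀ l₁ : List (Fin n), pcost γ (l₁ ++ a :: l₂) = pcost γ (l₁ ++ [a]) + pcost γ (a :: l₂)
  | [] => by simp
  | [x] => by simp [pcost_cons_cons]
  | x :: y :: t => by
      have := pcost_split γ a l₂ (y :: t)
      simp only [List.cons_append, pcost_cons_cons] at this ⊢
      rw [this]; ring

lemma pcost_sub_const (γ : Fin n → Fin n → ℝ) (e : ℝ) :
    ∀ (a : Fin n) (l : List (Fin n)),
      pcost (fun i j => γ i j - e) (a :: l) = pcost γ (a :: l) - l.length * e
  | _, [] => by simp
  | a, b :: t => by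
      have := pcost_sub_const γ e b t
      simp only [pcost_cons_cons, List.length_cons] at this ⊢
      rw [this]; push_cast; ring

lemma pcost_eq_sum (γ : Fin n → Fin n → ℝ) :
    ∀ (m : ℕ) (l : List (Fin n)) (h : l.length = m + 1),
      pcost γ l = ∑ s : Fin m, γ (l.get ⟨s.val, by omega⟩)
        (l.get ⟨s.val + 1, by have := s.isLt; omega⟩)
  | 0, [], h => by simp at h
  | 0, [a], _ => by simp
  | 0, a :: b :: t, h => by simp at h
  | m + 1, [], h => by simp at h
  | m + 1, [a], h => by simp at h
  | m + 1, a :: b :: t, h => by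
      have hlen : (b :: t).length = m + 1 := by simpa using h
      have IH := pcost_eq_sum γ m (b :: t) hlen
      rw [pcost_cons_cons, IH, Fin.sum_univ_succ]
      congr 1

/-- cycle sum of a list equals a `Fin`-indexed cycle sum -/
lemma cycle_sum_eq (γ : Fin n → Fin n → ℝ) (w : List (Fin n)) (hw : w ≠ [])
    (m : ℕ) (hm : w.length = m + 1) :
    ∑ s : Fin (m + 1), γ (w.get ⟨(s : Fin (m+1)).val, by omega⟩)
        (w.get ⟨((s + 1 : Fin (m+1))).val, by have := (s+1 : Fin (m+1)).isLt; omega⟩)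
      = pcost γ w + γ (w.getLast hw) (w.head hw) := by
  rw [Fin.sum_univ_castSucc]
  congr 1
  · rw [pcost_eq_sum γ m w hm]
    apply Finset.sum_congr rfl
    intro s _
    have hv : ((s.castSucc : Fin (m+1)) + 1).val = s.val + 1 :=
      Fin.val_add_one_of_lt (Fin.castSucc_lt_last s)
    congr 1
    · exact congrArg w.get (Fin.ext hv)
  · have h0 : ((Fin.last m) + 1 : Fin (m+1)) = 0 := Fin.last_add_one m
    congr 1
    · rw [List.getLast_eq_getElem]
      exact congrArg w.get (Fin.ext (by simp [hm]))
    · rw [List.head_eq_getElem_zero]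
      exact congrArg w.get (Fin.ext (by simp [h0]))

theorem exists_potential (c : Fin n → Fin n → ℝ)
    (H : ∀ (m : ℕ) (i : Fin (m + 1) → Fin n), 1 ≤ m → Function.Injective i →
        0 < ∑ k : Fin (m + 1), c (i k) (i (k + 1))) :
    ∃ ψ : Fin n → ℝ, ∀ i j, i ≠ j → ψ i - ψ j < c i j := by
  classical
  -- δ : a positive lower bound for all simple-cycle costs
  set T := ((m : Fin n) × (Fin (m.val + 1) → Fin n)) with hT
  set g : T → ℝ := fun p =>
    if 1 ≤ p.1.val ∧ Function.Injective p.2 then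
      ∑ k : Fin (p.1.val + 1), c (p.2 k) (p.2 (k + 1)) else 1 with hg
  set S : Finset ℝ := insert 1 (Finset.univ.image g) with hS
  have hSne : S.Nonempty := ⟨1, Finset.mem_insert_self 1 _⟩
  set δ : ℝ := S.min' hSne with hδ
  have hSpos : ∀ x ∈ S, (0:ℝ) < x := by
    intro x hx
    simp only [hS, Finset.mem_insert, Finset.mem_image] at hx
    rcases hx with h | ⟨p, _, hp⟩
    · rw [h]; norm_num
    · rw [← hp, hg]
      by_cases hcond : 1 ≤ p.1.val ∧ Function.Injective p.2
      · simp only [hcond, if_true]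
        exact H p.1.val p.2 hcond.1 hcond.2
      · simp only [hcond, if_false]; norm_num
  have hδpos : 0 < δ := hSpos _ (S.min'_mem hSne)
  have hδ1 : δ ≤ 1 := Finset.min'_le _ _ (Finset.mem_insert_self 1 _)
  have hδle : ∀ (m : ℕ) (i : Fin (m + 1) → Fin n), 1 ≤ m → Function.Injective i →
      δ ≤ ∑ k : Fin (m + 1), c (i k) (i (k + 1)) := by
    intro m i hm hinj
    have hcard : m + 1 ≤ n := by
      have := Fintype.card_le_of_injective i hinj
      simpa using this
    have hmn : m < n := by omega
    have : g ⟨⟨m, hmn⟩, i⟩ = ∑ k : Fin (m + 1), c (i k) (i (k + 1)) := by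
      rw [hg]; exact if_pos ⟨hm, hinj⟩
    rw [← this]
    exact Finset.min'_le _ _ (Finset.mem_insert_of_mem
      (Finset.mem_image_of_mem g (Finset.mem_univ _)))
  -- cycle lower bound in list form
  have CYC : ∀ (w : List (Fin n)) (hw : w ≠ []), w.Nodup → 2 ≤ w.length →
      δ ≤ pcost c w + c (w.getLast hw) (w.head hw) := by
    intro w hw hnd hlen
    obtain ⟨m, hm⟩ : ∃ m, w.length = m + 1 := ⟨w.length - 1, by omega⟩
    have hm1 : 1 ≤ m := by omega
    set imap : Fin (m + 1) → Fin n := fun s => w.get ⟨s.val, by omega⟩ with himap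
    have hinj : Function.Injective imap := by
      intro a b hab
      have h2 := List.nodup_iff_injective_get.mp hnd hab
      have hv : (a : ℕ) = (b : ℕ) := by simpa using congrArg Fin.val h2
      exact Fin.ext hv
    have := hδle m imap hm1 hinj
    rw [← cycle_sum_eq c w hw m hm]
    convert this using 2
  -- ε and the perturbed cost
  set ε : ℝ := δ / (2 * (n + 1)) with hε
  have hεpos : 0 < ε := by rw [hε]; positivity
  have hnε : (n : ℝ) * ε ≤ δ / 2 := by
    rw [hε, mul_div_assoc', div_le_div_iff₀ (by positivity) (by norm_num)]
    have hn : (0:ℝ) ≤ (n:ℝ) := Nat.cast_nonneg n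
    nlinarith [hδpos]
  set c' : Fin n → Fin n → ℝ := fun i j => c i j - ε with hc'
  -- shortest simple-path potentials
  set Paths : Fin n → Set (List (Fin n)) := fun j =>
    {l | l.Nodup ∧ ∃ h : l ≠ [], l.getLast h = j} with hPaths
  set costs : Fin n → Set ℝ := fun j => pcost c' '' Paths j with hcosts
  have hfin : ∀ j, (costs j).Finite := by
    intro j
    apply Set.Finite.image
    apply Set.Finite.subset (List.finite_length_le (Fin n) n)
    intro l hl
    have : l.Nodup := hl.1
    simpa using this.length_le_card
  have hne : ∀ j, (costs j).Nonempty := by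
    intro j
    exact ⟨pcost c' [j], [j], ⟨List.nodup_singleton j, by simp, by simp⟩, rfl⟩
  set dd : Fin n → ℝ := fun j => sInf (costs j) with hdd
  have hdmem : ∀ j, dd j ∈ costs j := fun j => Set.Nonempty.csInf_mem (hne j) (hfin j)
  have hdle : ∀ j x, x ∈ costs j → dd j ≤ x := fun j x hx =>
    csInf_le (hfin j).bddBelow hx
  -- the key strict triangle inequality
  have key : ∀ i j : Fin n, i ≠ j → dd j < dd i + c i j := by
    intro i j hij
    obtain ⟨p, ⟨hpnd, hpne, hplast⟩, hpc⟩ := hdmem i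
    by_cases hjp : j ∈ p
    · -- j lies on the optimal path to i : truncate and use cycle positivity
      obtain ⟨p₁, p₂, rfl⟩ := List.append_of_mem hjp
      have hp₂ne : p₂ ≠ [] := by
        intro h
        subst h
        rw [List.getLast_append_singleton] at hplast
        exact hij hplast.symm
      have hqsub : List.Sublist (p₁ ++ [j]) (p₁ ++ j :: p₂) :=
        List.Sublist.append_left (List.cons_sublist_cons.mpr (List.nil_sublist p₂)) p₁
      have hqnd : (p₁ ++ [j]).Nodup := List.Nodup.sublist hqsub hpnd
      have hqne : p₁ ++ [j] ≠ [] := by simp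
      have hqlast : (p₁ ++ [j]).getLast hqne = j := List.getLast_append_singleton p₁
      have hdjq : dd j ≤ pcost c' (p₁ ++ [j]) :=
        hdle j _ ⟨p₁ ++ [j], ⟨hqnd, hqne, hqlast⟩, rfl⟩
      have hwne : (j :: p₂) ≠ [] := by simp
      have hwnd : (j :: p₂).Nodup :=
        List.Nodup.sublist (List.sublist_append_right p₁ (j :: p₂)) hpnd
      have hwlast : (j :: p₂).getLast hwne = i := by
        rw [← hplast]
        exact (List.getLast_append_of_ne_nil _ hwne).symm
      have hwlen : 2 ≤ (j :: p₂).length := by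
        rcases p₂ with _ | ⟨a, t⟩
        · exact absurd rfl hp₂ne
        · simp
      have hwhead : (j :: p₂).head hwne = j := rfl
      have hcyc : δ ≤ pcost c (j :: p₂) + c i j := by
        have := CYC (j :: p₂) hwne hwnd hwlen
        rwa [hwlast, hwhead] at this
      -- pcost relations
      have hsplit : pcost c' (p₁ ++ j :: p₂) = pcost c' (p₁ ++ [j]) + pcost c' (j :: p₂) :=
        pcost_split c' j p₂ p₁
      have hsub : pcost c' (j :: p₂) = pcost c (j :: p₂) - p₂.length * ε := by
        have := pcost_sub_const c ε j p₂
        simpa [hc'] using this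
      have hwlencard : (j :: p₂).length ≤ n := by simpa using hwnd.length_le_card
      have hp₂len : (p₂.length : ℝ) * ε ≤ (n : ℝ) * ε := by
        apply mul_le_mul_of_nonneg_right _ hεpos.le
        have : p₂.length ≤ n := by simp at hwlencard; omega
        exact_mod_cast this
      have heq : dd i + c i j
          = pcost c' (p₁ ++ [j]) + (pcost c (j :: p₂) + c i j - p₂.length * ε) := by
        rw [← hpc, hsplit, hsub]; ring
      rw [heq]
      have hpos : 0 < pcost c (j :: p₂) + c i j - p₂.length * ε := by
        have h1 : δ - (n:ℝ) * ε ≥ δ / 2 := by linarith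
        linarith
      linarith
    · -- j not on the path : extend
      set p' : List (Fin n) := p ++ [j] with hp'
      have hp'nd : p'.Nodup := by
        rw [hp', List.nodup_append]
        exact ⟨hpnd, List.nodup_singleton j, by
          intro a ha b hb hab
          simp at hb
          exact hjp (by rw [← hb, ← hab]; exact ha)⟩
      have hp'ne : p' ≠ [] := by simp [hp']
      have hp'last : p'.getLast hp'ne = j := List.getLast_append_singleton p
      have hdjp' : dd j ≤ pcost c' p' := hdle j _ ⟨p', ⟨hp'nd, hp'ne, hp'last⟩, rfl⟩
      have : pcost c' p' = pcost c' p + c' (p.getLast hpne) j :=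
        pcost_append_singleton c' j p hpne
      rw [hplast] at this
      have hcc' : c' i j = c i j - ε := rfl
      rw [this, hcc', hpc] at hdjp'
      linarith
  refine ⟨fun j => -(dd j), fun i j hij => ?_⟩
  have := key i j hij
  show -(dd i) - -(dd j) < c i j
  linarith

/-- Easy direction: a strict potential forces all simple cycles to be positive. -/
lemma cycles_pos_of_potential {n : ℕ} (c : Fin n → Fin n → ℝ) (ψ : Fin n → ℝ)
    (hψ : ∀ i j : Fin n, i ≠ j → ψ i - ψ j < c i j) :
    ∀ (m : ℕ) (i : Fin (m + 1) → Fin n), 1 ≤ m → Function.Injective i →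
      0 < ∑ k : Fin (m + 1), c (i k) (i (k + 1)) := by
  intro m i hm hinj
  have hne : ∀ k : Fin (m + 1), k ≠ k + 1 := by
    intro k hk
    have hv := congrArg Fin.val hk
    have hadd : ((k + 1 : Fin (m + 1)) : ℕ) = ((k : ℕ) + 1) % (m + 1) := by
      simp [Fin.add_def]
    rw [hadd] at hv
    rcases Nat.lt_or_ge (k : ℕ) m with h | h
    · rw [Nat.mod_eq_of_lt (by omega)] at hv; omega
    · have hkm : (k : ℕ) = m := by have := k.isLt; omega
      rw [hkm] at hv
      rw [Nat.mod_self] at hv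
      omega
  have htel : ∑ k : Fin (m + 1), (ψ (i k) - ψ (i (k + 1))) = 0 := by
    rw [Finset.sum_sub_distrib]
    have : ∑ k : Fin (m + 1), ψ (i (k + 1)) = ∑ k : Fin (m + 1), ψ (i k) :=
      Fintype.sum_equiv (Equiv.addRight (1 : Fin (m + 1))) _ _ (fun k => rfl)
    rw [this, sub_self]
  have hlt : ∑ k : Fin (m + 1), (ψ (i k) - ψ (i (k + 1)))
      < ∑ k : Fin (m + 1), c (i k) (i (k + 1)) := by
    apply Finset.sum_lt_sum_of_nonempty Finset.univ_nonempty
    intro k _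
    exact hψ (i k) (i (k + 1)) (fun h => hne k (hinj h))
  rw [htel] at hlt
  exact hlt

end FarkasAux

/-- Farkas/cycle alternative for the costs `c i j = ⟪x i, y i - y j⟫`:
exactly one of (a) there exists `ψ` with `ψ i - ψ j - c i j < 0` for all `i ≠ j`, and
(b) there is a nontrivial cycle of distinct indices with nonpositive total cost, holds.
Consequently, strict cyclical monotonicity (every nontrivial cycle has positive cost) is
equivalent to the existence of weights `ψ` with `⟪x i, y i - y j⟫ > ψ i - ψ j` for
all `i ≠ j`. -/
theorem farkas_cycle_alternative
    {d n : ℕ} (x y : Fin n → EuclideanSpace ℝ (Fin d))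
    (c : Fin n → Fin n → ℝ) (hc : ∀ i j, c i j = ⟪x i, y i - y j⟫) :
    Xor'
      (∃ ψ : Fin n → ℝ, ∀ i j : Fin n, i ≠ j → ψ i - ψ j - c i j < 0)
      (∃ (m : ℕ) (i : Fin (m + 1) → Fin n), 1 ≤ m ∧ Function.Injective i ∧
        ∑ k : Fin (m + 1), c (i k) (i (k + 1)) ≤ 0) ∧
    ((∀ (m : ℕ) (i : Fin (m + 1) → Fin n), 1 ≤ m → Function.Injective i →
        0 < ∑ k : Fin (m + 1), c (i k) (i (k + 1)))
      ↔ ∃ ψ : Fin n → ℝ, ∀ i j : Fin n, i ≠ j → ψ i - ψ j < c i j) := by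
  have hmain : (∀ (m : ℕ) (i : Fin (m + 1) → Fin n), 1 ≤ m → Function.Injective i →
        0 < ∑ k : Fin (m + 1), c (i k) (i (k + 1)))
      ↔ ∃ ψ : Fin n → ℝ, ∀ i j : Fin n, i ≠ j → ψ i - ψ j < c i j := by
    constructor
    · exact FarkasAux.exists_potential c
    · rintro ⟨ψ, hψ⟩
      exact FarkasAux.cycles_pos_of_potential c ψ hψ
  refine ⟨?_, hmain⟩
  by_cases hB : ∃ (m : ℕ) (i : Fin (m + 1) → Fin n), 1 ≤ m ∧ Function.Injective i ∧
      ∑ k : Fin (m + 1), c (i k) (i (k + 1)) ≤ 0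
  · right
    refine ⟨hB, ?_⟩
    rintro ⟨ψ, hψ⟩
    obtain ⟨m, i, hm, hinj, hsum⟩ := hB
    have := FarkasAux.cycles_pos_of_potential c ψ
      (fun i j hij => by have := hψ i j hij; linarith) m i hm hinj
    linarith
  · left
    have hpos : ∀ (m : ℕ) (i : Fin (m + 1) → Fin n), 1 ≤ m → Function.Injective i →
        0 < ∑ k : Fin (m + 1), c (i k) (i (k + 1)) := by
      intro m i hm hinj
      by_contra h
      exact hB ⟨m, i, hm, hinj, by linarith⟩
    obtain ⟨ψ, hψ⟩ := hmain.mp hpos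
    exact ⟨⟨ψ, fun i j hij => by have := hψ i j hij; linarith⟩, hB⟩
end
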